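/- Let μ ∈ ℂ with |μ| = 1 and μ ∉ ℝ, and set k = ⌊n/2⌋. Let V be the real subspace of ℂ^{n×n} consisting of all diagonal matrices D = diag(d₁,…,d_n) with d_j ∈ ℂ arbitrary for 1 ≤ j ≤ k, with d_{k+1} ∈ ℝ in case n = 2k+1, and with all remaining diagonal entries equal to 0. Then for every A ∈ ℂ^{n×n} there exists exactly one D ∈ V such that A − D ∈ T(μΔ_n); that is, ℂ^{n×n} = T(μΔ_n) ⊕_ℝ V. -/

import Mathlib

open Matrix

/-- The `n×n` upper-triangular Jordan block with eigenvalue `l`. -/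
noncomputable def Jmat (n : ℕ) (l : ℂ) : Matrix (Fin n) (Fin n) ℂ :=
  Matrix.of fun i j =>
    if (i : ℕ) = (j : ℕ) then l
    else if (j : ℕ) = (i : ℕ) + 1 then 1 else 0

/-- The symmetric matrix `Δ_n`: (1-based) entry `(j,k)` is `1` if `j+k = n+1`,
`i` if `j+k = n+2`, and `0` otherwise. -/
noncomputable def Dmat (n : ℕ) : Matrix (Fin n) (Fin n) ℂ :=
  Matrix.of fun i j =>
    if (i : ℕ) + (j : ℕ) + 1 = n then 1
    else if (i : ℕ) + (j : ℕ) = n then Complex.I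
    else 0

/-- The `2m×2m` block matrix `H_m(l) = [[0, I],[J_m(l), 0]]`. -/
noncomputable def Hmat (m : ℕ) (l : ℂ) : Matrix (Fin m ⊕ Fin m) (Fin m ⊕ Fin m) ℂ :=
  Matrix.fromBlocks 0 1 (Jmat m l) 0

/-- `T(A) = {CᴴA + AC}`, the tangent space to the *congruence class of `A`. -/
def Tset {n : Type*} [Fintype n] (A : Matrix n n ℂ) : Set (Matrix n n ℂ) :=
  {X | ∃ C : Matrix n n ℂ, X = Cᴴ * A + A * C}

/-- `T(M,N) = {(SᴴM + NR, RᴴN + MS)}`. -/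
def Tpair {p q : Type*} [Fintype p] [Fintype q]
    (M : Matrix p p ℂ) (N : Matrix q q ℂ) :
    Set (Matrix q p ℂ × Matrix p q ℂ) :=
  {X | ∃ (S : Matrix p q ℂ) (R : Matrix q p ℂ),
      X = (Sᴴ * M + N * R, Rᴴ * N + M * S)}

namespace S8
variable (n : ℕ) (μ : ℂ)

noncomputable def adiag (s : ℕ) (X : Matrix (Fin n) (Fin n) ℂ) : ℂ :=
  ∑ p : Fin n, ∑ q : Fin n, if (p : ℕ) + (q : ℕ) = s then X p q else 0

noncomputable def bdiag (m : ℕ) (X : Matrix (Fin n) (Fin n) ℂ) : ℂ :=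
  ∑ p : Fin n, ∑ q : Fin n, if (p : ℕ) = (q : ℕ) + m then X p q else 0

lemma sum_pick {M : Type*} [AddCommMonoid M] (c : Fin n → M) (P : ℕ → Prop) [DecidablePred P]
    (a : Fin n) (hPa : P (a : ℕ))
    (hu : ∀ b : Fin n, P (b : ℕ) → b = a) :
    (∑ p : Fin n, if P (p : ℕ) then c p else 0) = c a := by
  rw [Finset.sum_eq_single a]
  · simp [hPa]
  · intro b _ hb
    rw [if_neg fun hPb => hb (hu b hPb)]
  · simp

lemma sum_pick_none {M : Type*} [AddCommMonoid M] (c : Fin n → M) (P : ℕ → Prop) [DecidablePred P]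
    (h : ∀ b : Fin n, ¬ P (b : ℕ)) :
    (∑ p : Fin n, if P (p : ℕ) then c p else 0) = 0 :=
  Finset.sum_eq_zero fun p _ => if_neg (h p)

lemma Dmat_split (p k : Fin n) :
    Dmat n p k = (if (p : ℕ) + (k : ℕ) + 1 = n then 1 else 0)
      + (if (p : ℕ) + (k : ℕ) = n then Complex.I else 0) := by
  simp only [Dmat, Matrix.of_apply]
  by_cases h1 : (p : ℕ) + (k : ℕ) + 1 = n
  · rw [if_pos h1, if_pos h1, if_neg (by omega), add_zero]
  · rw [if_neg h1, if_neg h1, zero_add]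

lemma ite_ite_and {M : Type*} [AddCommMonoid M] (P Q : Prop) [Decidable P] [Decidable Q] (x : M) :
    (if P then (if Q then x else 0) else 0) = if P ∧ Q then x else 0 := by
  split_ifs <;> simp_all

lemma sum_swap3 {M : Type*} [AddCommMonoid M] (f : Fin n → Fin n → Fin n → M) :
    (∑ p : Fin n, ∑ q : Fin n, ∑ k : Fin n, f p q k)
      = ∑ k : Fin n, ∑ q : Fin n, ∑ p : Fin n, f p q k := by
  rw [Finset.sum_comm]
  have h : ∀ q : Fin n, (∑ p : Fin n, ∑ k : Fin n, f p q k)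
      = ∑ k : Fin n, ∑ p : Fin n, f p q k := fun q => Finset.sum_comm
  simp only [h]
  exact Finset.sum_comm

lemma adiag_A_mul (s : ℕ) (hs : s < n) (C : Matrix (Fin n) (Fin n) ℂ) :
    adiag n s ((μ • Dmat n) * C)
      = μ * (bdiag n (n - 1 - s) C + Complex.I * bdiag n (n - s) C) := by
  have step1 : adiag n s ((μ • Dmat n) * C)
      = ∑ p : Fin n, ∑ q : Fin n, ∑ k : Fin n,
          ((if ((p : ℕ) + (q : ℕ) = s) ∧ ((p : ℕ) + (k : ℕ) + 1 = n) then μ * C k q else 0)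
          + (if ((p : ℕ) + (q : ℕ) = s) ∧ ((p : ℕ) + (k : ℕ) = n) then μ * Complex.I * C k q else 0)) := by
    unfold adiag
    refine Finset.sum_congr rfl fun p _ => Finset.sum_congr rfl fun q _ => ?_
    rw [Matrix.mul_apply]
    rw [show (if (p : ℕ) + (q : ℕ) = s then (∑ k : Fin n, (μ • Dmat n) p k * C k q) else 0)
        = ∑ k : Fin n, (if (p : ℕ) + (q : ℕ) = s then (μ • Dmat n) p k * C k q else 0) by
      split <;> simp]
    refine Finset.sum_congr rfl fun k _ => ?_
    rw [← ite_ite_and, ← ite_ite_and, Matrix.smul_apply, Dmat_split, smul_eq_mul]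
    split
    · split_ifs <;> ring
    · simp
  rw [step1, sum_swap3]
  have step2 : ∀ k q : Fin n,
      (∑ p : Fin n,
          ((if ((p : ℕ) + (q : ℕ) = s) ∧ ((p : ℕ) + (k : ℕ) + 1 = n) then μ * C k q else 0)
          + (if ((p : ℕ) + (q : ℕ) = s) ∧ ((p : ℕ) + (k : ℕ) = n) then μ * Complex.I * C k q else 0)))
      = (if (k : ℕ) = (q : ℕ) + (n - 1 - s) then μ * C k q else 0)
        + (if (k : ℕ) = (q : ℕ) + (n - s) then μ * Complex.I * C k q else 0) := by
    intro k q
    rw [Finset.sum_add_distrib]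
    congr 1
    · by_cases hk : (k : ℕ) = (q : ℕ) + (n - 1 - s)
      · rw [if_pos hk]
        have hkb := k.isLt
        refine sum_pick n (fun _ => μ * C k q)
          (fun a => a + (q : ℕ) = s ∧ a + (k : ℕ) + 1 = n) ⟨s - (q : ℕ), ?_⟩ ?_ ?_
        · omega
        · simp only [Fin.val_mk]; omega
        · intro b hb; apply Fin.ext; simp only [Fin.val_mk]; omega
      · rw [if_neg hk]
        refine sum_pick_none n (fun _ => μ * C k q)
          (fun a => a + (q : ℕ) = s ∧ a + (k : ℕ) + 1 = n) ?_
        intro b hb; exact hk (by omega)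
    · by_cases hk : (k : ℕ) = (q : ℕ) + (n - s)
      · rw [if_pos hk]
        have hkb := k.isLt
        refine sum_pick n (fun _ => μ * Complex.I * C k q)
          (fun a => a + (q : ℕ) = s ∧ a + (k : ℕ) = n) ⟨s - (q : ℕ), ?_⟩ ?_ ?_
        · omega
        · simp only [Fin.val_mk]; omega
        · intro b hb; apply Fin.ext; simp only [Fin.val_mk]; omega
      · rw [if_neg hk]
        refine sum_pick_none n (fun _ => μ * Complex.I * C k q)
          (fun a => a + (q : ℕ) = s ∧ a + (k : ℕ) = n) ?_
        intro b hb; exact hk (by omega)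
  simp only [step2]
  simp only [Finset.sum_add_distrib]
  unfold bdiag
  rw [mul_add]
  congr 1
  · rw [Finset.mul_sum]
    refine Finset.sum_congr rfl fun k _ => ?_
    rw [Finset.mul_sum]
    refine Finset.sum_congr rfl fun q _ => ?_
    split <;> ring
  · rw [Finset.mul_sum, Finset.mul_sum]
    refine Finset.sum_congr rfl fun k _ => ?_
    rw [Finset.mul_sum, Finset.mul_sum]
    refine Finset.sum_congr rfl fun q _ => ?_
    split <;> ring

end S8

namespace S8

lemma sum_swap3' {n : ℕ} {M : Type*} [AddCommMonoid M] (f : Fin n → Fin n → Fin n → M) :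
    (∑ p : Fin n, ∑ q : Fin n, ∑ k : Fin n, f p q k)
      = ∑ k : Fin n, ∑ p : Fin n, ∑ q : Fin n, f p q k := by
  rw [sum_swap3]
  exact Finset.sum_congr rfl fun k _ => Finset.sum_comm

lemma conj_bdiag {n : ℕ} (m : ℕ) (C : Matrix (Fin n) (Fin n) ℂ) :
    (starRingEnd ℂ) (bdiag n m C)
      = ∑ p : Fin n, ∑ q : Fin n, if (p : ℕ) = (q : ℕ) + m then (starRingEnd ℂ) (C p q) else 0 := by
  unfold bdiag
  rw [map_sum]
  refine Finset.sum_congr rfl fun p _ => ?_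
  rw [map_sum]
  refine Finset.sum_congr rfl fun q _ => ?_
  split <;> simp

lemma bdiag_ge {n : ℕ} (m : ℕ) (hm : n ≤ m) (C : Matrix (Fin n) (Fin n) ℂ) :
    bdiag n m C = 0 := by
  refine Finset.sum_eq_zero fun p _ => Finset.sum_eq_zero fun q _ => if_neg ?_
  have := p.isLt
  omega

lemma adiag_mul_A (n : ℕ) (μ : ℂ) (s : ℕ) (hs : s < n) (C : Matrix (Fin n) (Fin n) ℂ) :
    adiag n s (Cᴴ * (μ • Dmat n))
      = μ * ((starRingEnd ℂ) (bdiag n (n - 1 - s) C)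
          + Complex.I * (starRingEnd ℂ) (bdiag n (n - s) C)) := by
  have step1 : adiag n s (Cᴴ * (μ • Dmat n))
      = ∑ p : Fin n, ∑ q : Fin n, ∑ k : Fin n,
          ((if ((p : ℕ) + (q : ℕ) = s) ∧ ((k : ℕ) + (q : ℕ) + 1 = n)
              then μ * (starRingEnd ℂ) (C k p) else 0)
          + (if ((p : ℕ) + (q : ℕ) = s) ∧ ((k : ℕ) + (q : ℕ) = n)
              then μ * Complex.I * (starRingEnd ℂ) (C k p) else 0)) := by
    unfold adiag
    refine Finset.sum_congr rfl fun p _ => Finset.sum_congr rfl fun q _ => ?_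
    rw [Matrix.mul_apply]
    rw [show (if (p : ℕ) + (q : ℕ) = s then (∑ k : Fin n, Cᴴ p k * (μ • Dmat n) k q) else 0)
        = ∑ k : Fin n, (if (p : ℕ) + (q : ℕ) = s then Cᴴ p k * (μ • Dmat n) k q else 0) by
      split <;> simp]
    refine Finset.sum_congr rfl fun k _ => ?_
    rw [← ite_ite_and, ← ite_ite_and, Matrix.smul_apply, Dmat_split, smul_eq_mul,
      Matrix.conjTranspose_apply]
    simp only [starRingEnd_apply]
    split
    · split_ifs <;> ring
    · simp
  rw [step1, sum_swap3']
  have step2 : ∀ k p : Fin n,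
      (∑ q : Fin n,
          ((if ((p : ℕ) + (q : ℕ) = s) ∧ ((k : ℕ) + (q : ℕ) + 1 = n)
              then μ * (starRingEnd ℂ) (C k p) else 0)
          + (if ((p : ℕ) + (q : ℕ) = s) ∧ ((k : ℕ) + (q : ℕ) = n)
              then μ * Complex.I * (starRingEnd ℂ) (C k p) else 0)))
      = (if (k : ℕ) = (p : ℕ) + (n - 1 - s) then μ * (starRingEnd ℂ) (C k p) else 0)
        + (if (k : ℕ) = (p : ℕ) + (n - s) then μ * Complex.I * (starRingEnd ℂ) (C k p) else 0) := by
    intro k p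
    rw [Finset.sum_add_distrib]
    congr 1
    · by_cases hk : (k : ℕ) = (p : ℕ) + (n - 1 - s)
      · rw [if_pos hk]
        have hkb := k.isLt
        refine sum_pick n (fun _ => μ * (starRingEnd ℂ) (C k p))
          (fun a => (p : ℕ) + a = s ∧ (k : ℕ) + a + 1 = n) ⟨s - (p : ℕ), ?_⟩ ?_ ?_
        · omega
        · simp only [Fin.val_mk]; omega
        · intro b hb; apply Fin.ext; simp only [Fin.val_mk]; omega
      · rw [if_neg hk]
        refine sum_pick_none n (fun _ => μ * (starRingEnd ℂ) (C k p))
          (fun a => (p : ℕ) + a = s ∧ (k : ℕ) + a + 1 = n) ?_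
        intro b hb; exact hk (by omega)
    · by_cases hk : (k : ℕ) = (p : ℕ) + (n - s)
      · rw [if_pos hk]
        have hkb := k.isLt
        refine sum_pick n (fun _ => μ * Complex.I * (starRingEnd ℂ) (C k p))
          (fun a => (p : ℕ) + a = s ∧ (k : ℕ) + a = n) ⟨s - (p : ℕ), ?_⟩ ?_ ?_
        · omega
        · simp only [Fin.val_mk]; omega
        · intro b hb; apply Fin.ext; simp only [Fin.val_mk]; omega
      · rw [if_neg hk]
        refine sum_pick_none n (fun _ => μ * Complex.I * (starRingEnd ℂ) (C k p))
          (fun a => (p : ℕ) + a = s ∧ (k : ℕ) + a = n) ?_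
        intro b hb; exact hk (by omega)
  simp only [step2]
  simp only [Finset.sum_add_distrib]
  rw [mul_add, conj_bdiag, conj_bdiag]
  congr 1
  · rw [Finset.mul_sum]
    refine Finset.sum_congr rfl fun k _ => ?_
    rw [Finset.mul_sum]
    refine Finset.sum_congr rfl fun q _ => ?_
    split <;> ring
  · rw [Finset.mul_sum, Finset.mul_sum]
    refine Finset.sum_congr rfl fun k _ => ?_
    rw [Finset.mul_sum, Finset.mul_sum]
    refine Finset.sum_congr rfl fun q _ => ?_
    split <;> ring

end S8

namespace S8
variable (n : ℕ) (μ : ℂ)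

noncomputable def tf (s : ℕ) (X : Matrix (Fin n) (Fin n) ℂ) : ℝ :=
  ((starRingEnd ℂ) μ * ((if s = 0 then 0 else adiag n (s - 1) X) + Complex.I * adiag n s X)).re

lemma adiag_add (s : ℕ) (X Y : Matrix (Fin n) (Fin n) ℂ) :
    adiag n s (X + Y) = adiag n s X + adiag n s Y := by
  unfold adiag
  rw [← Finset.sum_add_distrib]
  refine Finset.sum_congr rfl fun p _ => ?_
  rw [← Finset.sum_add_distrib]
  refine Finset.sum_congr rfl fun q _ => ?_
  split <;> simp

lemma adiag_smul (s : ℕ) (r : ℝ) (X : Matrix (Fin n) (Fin n) ℂ) :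
    adiag n s (r • X) = (r : ℂ) * adiag n s X := by
  unfold adiag
  rw [Finset.mul_sum]
  refine Finset.sum_congr rfl fun p _ => ?_
  rw [Finset.mul_sum]
  refine Finset.sum_congr rfl fun q _ => ?_
  split <;> simp [Complex.real_smul]

lemma tf_psi_zero (s : ℕ) (hs : s < n) (C : Matrix (Fin n) (Fin n) ℂ) :
    tf n μ s (Cᴴ * (μ • Dmat n) + (μ • Dmat n) * C) = 0 := by
  unfold tf
  by_cases h0 : s = 0
  · subst h0
    rw [if_pos rfl, adiag_add, adiag_mul_A n μ 0 hs C, adiag_A_mul n μ 0 hs C]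
    simp only [Nat.sub_zero]
    rw [bdiag_ge n le_rfl C]
    simp only [map_zero, mul_zero, add_zero]
    simp only [Complex.add_re, Complex.add_im, Complex.mul_re, Complex.mul_im,
      Complex.I_re, Complex.I_im, Complex.conj_re, Complex.conj_im, Complex.zero_re,
      Complex.zero_im, zero_add, mul_zero, zero_mul, mul_one, one_mul]
    ring
  · rw [if_neg h0, adiag_add, adiag_add,
      adiag_mul_A n μ (s-1) (by omega) C, adiag_A_mul n μ (s-1) (by omega) C,
      adiag_mul_A n μ s hs C, adiag_A_mul n μ s hs C]
    have e1 : n - 1 - (s - 1) = n - s := by omega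
    have e2 : n - (s - 1) = n - s + 1 := by omega
    rw [e1, e2]
    simp only [Complex.add_re, Complex.add_im, Complex.mul_re, Complex.mul_im,
      Complex.I_re, Complex.I_im, Complex.conj_re, Complex.conj_im, Complex.zero_re,
      Complex.zero_im, zero_add, mul_zero, zero_mul, mul_one, one_mul]
    ring

/-- `C` extended by zero outside the index range -/
noncomputable def cent (C : Matrix (Fin n) (Fin n) ℂ) (a b : ℕ) : ℂ :=
  if h : a < n ∧ b < n then C ⟨a, h.1⟩ ⟨b, h.2⟩ else 0

lemma cent_in (C : Matrix (Fin n) (Fin n) ℂ) (a b : ℕ) (ha : a < n) (hb : b < n) :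
    cent n C a b = C ⟨a, ha⟩ ⟨b, hb⟩ := dif_pos ⟨ha, hb⟩

lemma cent_out (C : Matrix (Fin n) (Fin n) ℂ) (a b : ℕ) (h : ¬ (a < n ∧ b < n)) :
    cent n C a b = 0 := dif_neg h

lemma A_mul_apply (C : Matrix (Fin n) (Fin n) ℂ) (p q : Fin n) :
    ((μ • Dmat n) * C) p q
      = μ * (cent n C (n - 1 - (p : ℕ)) (q : ℕ)
          + Complex.I * cent n C (n - (p : ℕ)) (q : ℕ)) := by
  rw [Matrix.mul_apply]
  have expand : ∀ k : Fin n, (μ • Dmat n) p k * C k q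
      = (if (p : ℕ) + (k : ℕ) + 1 = n then μ * C k q else 0)
        + (if (p : ℕ) + (k : ℕ) = n then μ * Complex.I * C k q else 0) := by
    intro k
    rw [Matrix.smul_apply, Dmat_split, smul_eq_mul]
    split_ifs <;> ring
  simp only [expand]
  rw [Finset.sum_add_distrib]
  have hp := p.isLt
  have hq := q.isLt
  have h1 : (∑ k : Fin n, if (p : ℕ) + (k : ℕ) + 1 = n then μ * C k q else 0)
      = μ * cent n C (n - 1 - (p : ℕ)) (q : ℕ) := by
    rw [cent_in n C _ _ (by omega) hq]
    refine sum_pick n (fun k => μ * C k q) (fun a => (p : ℕ) + a + 1 = n)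
      ⟨n - 1 - (p : ℕ), by omega⟩ ?_ ?_
    · simp only [Fin.val_mk]; omega
    · intro b hb; apply Fin.ext; simp only [Fin.val_mk]; omega
  have h2 : (∑ k : Fin n, if (p : ℕ) + (k : ℕ) = n then μ * Complex.I * C k q else 0)
      = μ * Complex.I * cent n C (n - (p : ℕ)) (q : ℕ) := by
    by_cases hp1 : 1 ≤ (p : ℕ)
    · rw [cent_in n C _ _ (by omega) hq]
      refine sum_pick n (fun k => μ * Complex.I * C k q) (fun a => (p : ℕ) + a = n)
        ⟨n - (p : ℕ), by omega⟩ ?_ ?_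
      · simp only [Fin.val_mk]; omega
      · intro b hb; apply Fin.ext; simp only [Fin.val_mk]; omega
    · rw [cent_out n C _ _ (by omega), mul_zero]
      refine sum_pick_none n (fun k => μ * Complex.I * C k q) (fun a => (p : ℕ) + a = n) ?_
      intro b
      have := b.isLt
      omega
  rw [h1, h2]
  ring

lemma mul_A_apply (C : Matrix (Fin n) (Fin n) ℂ) (p q : Fin n) :
    (Cᴴ * (μ • Dmat n)) p q
      = μ * ((starRingEnd ℂ) (cent n C (n - 1 - (q : ℕ)) (p : ℕ))
          + Complex.I * (starRingEnd ℂ) (cent n C (n - (q : ℕ)) (p : ℕ))) := by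
  rw [Matrix.mul_apply]
  have expand : ∀ k : Fin n, Cᴴ p k * (μ • Dmat n) k q
      = (if (k : ℕ) + (q : ℕ) + 1 = n then μ * (starRingEnd ℂ) (C k p) else 0)
        + (if (k : ℕ) + (q : ℕ) = n then μ * Complex.I * (starRingEnd ℂ) (C k p) else 0) := by
    intro k
    rw [Matrix.smul_apply, Dmat_split, smul_eq_mul, Matrix.conjTranspose_apply]
    simp only [starRingEnd_apply]
    split_ifs <;> ring
  simp only [expand]
  rw [Finset.sum_add_distrib]
  have hp := p.isLt
  have hq := q.isLt
  have h1 : (∑ k : Fin n, if (k : ℕ) + (q : ℕ) + 1 = n then μ * (starRingEnd ℂ) (C k p) else 0)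
      = μ * (starRingEnd ℂ) (cent n C (n - 1 - (q : ℕ)) (p : ℕ)) := by
    rw [cent_in n C _ _ (by omega) hp]
    refine sum_pick n (fun k => μ * (starRingEnd ℂ) (C k p)) (fun a => a + (q : ℕ) + 1 = n)
      ⟨n - 1 - (q : ℕ), by omega⟩ ?_ ?_
    · simp only [Fin.val_mk]; omega
    · intro b hb; apply Fin.ext; simp only [Fin.val_mk]; omega
  have h2 : (∑ k : Fin n, if (k : ℕ) + (q : ℕ) = n then μ * Complex.I * (starRingEnd ℂ) (C k p) else 0)
      = μ * Complex.I * (starRingEnd ℂ) (cent n C (n - (q : ℕ)) (p : ℕ)) := by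
    by_cases hq1 : 1 ≤ (q : ℕ)
    · rw [cent_in n C _ _ (by omega) hp]
      refine sum_pick n (fun k => μ * Complex.I * (starRingEnd ℂ) (C k p)) (fun a => a + (q : ℕ) = n)
        ⟨n - (q : ℕ), by omega⟩ ?_ ?_
      · simp only [Fin.val_mk]; omega
      · intro b hb; apply Fin.ext; simp only [Fin.val_mk]; omega
    · rw [cent_out n C _ _ (by omega), map_zero, mul_zero]
      refine sum_pick_none n (fun k => μ * Complex.I * (starRingEnd ℂ) (C k p)) (fun a => a + (q : ℕ) = n) ?_
      intro b
      have := b.isLt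
      omega
  rw [h1, h2]
  ring


noncomputable def toep (n : ℕ) (g : Fin n → ℝ) : Matrix (Fin n) (Fin n) ℂ :=
  Matrix.of fun u j =>
    if h : (u : ℕ) ≤ (j : ℕ)
    then ((g ⟨(j : ℕ) - (u : ℕ), Nat.lt_of_le_of_lt (Nat.sub_le _ _) j.isLt⟩ : ℝ) : ℂ) * Complex.I
    else 0

lemma ker_structure (hμ0 : μ ≠ 0) (C : Matrix (Fin n) (Fin n) ℂ)
    (hC : Cᴴ * (μ • Dmat n) + (μ • Dmat n) * C = 0) :
    ∃ g : Fin n → ℝ, C = toep n g := by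
  have hent : ∀ p q : Fin n,
      ((starRingEnd ℂ) (cent n C (n - 1 - (q : ℕ)) (p : ℕ))
        + cent n C (n - 1 - (p : ℕ)) (q : ℕ))
      + Complex.I * ((starRingEnd ℂ) (cent n C (n - (q : ℕ)) (p : ℕ))
        + cent n C (n - (p : ℕ)) (q : ℕ)) = 0 := by
    intro p q
    have h0 : (Cᴴ * (μ • Dmat n) + (μ • Dmat n) * C) p q = 0 := by rw [hC]; rfl
    rw [Matrix.add_apply, mul_A_apply, A_mul_apply] at h0
    have h0' : μ * (((starRingEnd ℂ) (cent n C (n - 1 - (q : ℕ)) (p : ℕ))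
        + cent n C (n - 1 - (p : ℕ)) (q : ℕ))
      + Complex.I * ((starRingEnd ℂ) (cent n C (n - (q : ℕ)) (p : ℕ))
        + cent n C (n - (p : ℕ)) (q : ℕ))) = 0 := by
      rw [← h0]; ring
    rcases mul_eq_zero.mp h0' with h | h
    · exact absurd h hμ0
    · exact h
  -- Hermitian splitting: both components vanish
  have hMN : ∀ p q : Fin n,
      (cent n C (n - 1 - (p : ℕ)) (q : ℕ)
        + (starRingEnd ℂ) (cent n C (n - 1 - (q : ℕ)) (p : ℕ)) = 0)
      ∧ (cent n C (n - (p : ℕ)) (q : ℕ)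
        + (starRingEnd ℂ) (cent n C (n - (q : ℕ)) (p : ℕ)) = 0) := by
    intro p q
    have e1 := hent p q
    have e2 := congrArg (starRingEnd ℂ) (hent q p)
    simp only [map_add, _root_.map_mul, map_zero, Complex.conj_I, RingHomCompTriple.comp_apply,
      RingHom.id_apply, Complex.conj_conj] at e2
    constructor
    · linear_combination (e1 + e2) / 2
    · have h2 : Complex.I * (cent n C (n - (p : ℕ)) (q : ℕ)
          + (starRingEnd ℂ) (cent n C (n - (q : ℕ)) (p : ℕ))) = 0 := by
        linear_combination (e1 - e2) / 2
      rcases mul_eq_zero.mp h2 with h | h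
      · exact absurd h Complex.I_ne_zero
      · exact h
  have hM : ∀ a b : ℕ, a < n → b < n →
      cent n C (n - 1 - a) b + (starRingEnd ℂ) (cent n C (n - 1 - b) a) = 0 := by
    intro a b ha hb
    exact (hMN ⟨a, ha⟩ ⟨b, hb⟩).1
  have hN : ∀ a b : ℕ, a < n → b < n →
      cent n C (n - a) b + (starRingEnd ℂ) (cent n C (n - b) a) = 0 := by
    intro a b ha hb
    exact (hMN ⟨a, ha⟩ ⟨b, hb⟩).2
  -- first column vanishes below the corner
  have col0 : ∀ w : ℕ, 1 ≤ w → w < n → cent n C w 0 = 0 := by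
    intro w hw1 hwn
    have h := hN (n - w) 0 (by omega) (by omega)
    rw [show n - (n - w) = w by omega] at h
    rw [cent_out n C (n - 0) (n - w) (by omega), map_zero, add_zero] at h
    exact h
  -- diagonal-shift invariance
  have hdiag : ∀ u b : ℕ, 1 ≤ u → u < n → 1 ≤ b → b < n →
      cent n C u b = cent n C (u - 1) (b - 1) := by
    intro u b hu1 hun hb1 hbn
    have h1 := hM (n - u) (b - 1) (by omega) (by omega)
    rw [show n - 1 - (n - u) = u - 1 by omega, show n - 1 - (b - 1) = n - b by omega] at h1
    have h2 := hN (n - u) b (by omega) hbn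
    rw [show n - (n - u) = u by omega] at h2
    linear_combination h2 - h1
  -- above the diagonal entries only depend on the offset
  have up0 : ∀ u j : ℕ, u ≤ j → j < n → cent n C u j = cent n C 0 (j - u) := by
    intro u
    induction u with
    | zero => intro j _ _; rw [Nat.sub_zero]
    | succ v ih =>
      intro j huj hj
      rw [hdiag (v + 1) j (by omega) (by omega) (by omega) hj]
      rw [Nat.add_sub_cancel]
      rw [ih (j - 1) (by omega) (by omega)]
      congr 1
      omega
  -- strictly below the diagonal everything vanishes
  have low0 : ∀ j u : ℕ, j < u → u < n → cent n C u j = 0 := by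
    intro j
    induction j with
    | zero => intro u h1 h2; exact col0 u (by omega) h2
    | succ w ih =>
      intro u h1 h2
      rw [hdiag u (w + 1) (by omega) h2 (by omega) (by omega), Nat.add_sub_cancel]
      exact ih (u - 1) (by omega) (by omega)
  -- the diagonal constants are purely imaginary
  have imag : ∀ m : ℕ, m < n → (cent n C 0 m).re = 0 := by
    intro m hm
    have h := hM (n - 1) m (by omega) hm
    rw [show n - 1 - (n - 1) = 0 by omega] at h
    rw [up0 (n - 1 - m) (n - 1) (by omega) (by omega)] at h
    rw [show n - 1 - (n - 1 - m) = m by omega] at h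
    have := congrArg Complex.re h
    simp only [Complex.add_re, Complex.conj_re, Complex.zero_re] at this
    linarith
  refine ⟨fun m => (cent n C 0 (m : ℕ)).im, ?_⟩
  ext u j
  by_cases huj : (u : ℕ) ≤ (j : ℕ)
  · have h1 : C u j = cent n C 0 ((j : ℕ) - (u : ℕ)) := by
      rw [← up0 (u : ℕ) (j : ℕ) huj j.isLt, cent_in n C _ _ u.isLt j.isLt]
    rw [h1]
    simp only [toep, Matrix.of_apply, dif_pos huj, Fin.val_mk]
    have hre := imag ((j : ℕ) - (u : ℕ)) (by omega)
    apply Complex.ext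
    · simp [hre]
    · simp
  · have h1 : C u j = cent n C (u : ℕ) (j : ℕ) := (cent_in n C _ _ u.isLt j.isLt).symm
    rw [h1, low0 (j : ℕ) (u : ℕ) (by omega) u.isLt]
    simp only [toep, Matrix.of_apply, dif_neg huj]



noncomputable def psiLin : Matrix (Fin n) (Fin n) ℂ →ₗ[ℝ] Matrix (Fin n) (Fin n) ℂ where
  toFun C := Cᴴ * (μ • Dmat n) + (μ • Dmat n) * C
  map_add' C C' := by
    rw [Matrix.conjTranspose_add, Matrix.add_mul, Matrix.mul_add]
    abel
  map_smul' r C := by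
    have h1 : (r • C)ᴴ * (μ • Dmat n) = r • (Cᴴ * (μ • Dmat n)) := by
      rw [Matrix.conjTranspose_smul, star_trivial, Matrix.smul_mul]
    have h2 : (μ • Dmat n) * (r • C) = r • ((μ • Dmat n) * C) := Matrix.mul_smul _ r C
    rw [h1, h2, RingHom.id_apply, smul_add]

noncomputable def tLin (s : ℕ) : Matrix (Fin n) (Fin n) ℂ →ₗ[ℝ] ℝ where
  toFun X := tf n μ s X
  map_add' X Y := by
    unfold tf
    simp only [adiag_add]
    by_cases h0 : s = 0
    · simp only [if_pos h0]
      have : (starRingEnd ℂ) μ * (0 + Complex.I * (adiag n s X + adiag n s Y))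
          = (starRingEnd ℂ) μ * (0 + Complex.I * adiag n s X)
            + (starRingEnd ℂ) μ * (0 + Complex.I * adiag n s Y) := by ring
      rw [this, Complex.add_re]
    · simp only [if_neg h0]
      have : (starRingEnd ℂ) μ * ((adiag n (s-1) X + adiag n (s-1) Y)
              + Complex.I * (adiag n s X + adiag n s Y))
          = (starRingEnd ℂ) μ * (adiag n (s-1) X + Complex.I * adiag n s X)
            + (starRingEnd ℂ) μ * (adiag n (s-1) Y + Complex.I * adiag n s Y) := by ring
      rw [this, Complex.add_re]
  map_smul' r X := by
    simp only [RingHom.id_apply, smul_eq_mul]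
    unfold tf
    simp only [adiag_smul]
    by_cases h0 : s = 0
    · simp only [if_pos h0]
      have : (starRingEnd ℂ) μ * (0 + Complex.I * ((r : ℂ) * adiag n s X))
          = (r : ℂ) * ((starRingEnd ℂ) μ * (0 + Complex.I * adiag n s X)) := by ring
      rw [this, Complex.re_ofReal_mul]
    · simp only [if_neg h0]
      have : (starRingEnd ℂ) μ * ((r : ℂ) * adiag n (s-1) X
              + Complex.I * ((r : ℂ) * adiag n s X))
          = (r : ℂ) * ((starRingEnd ℂ) μ * (adiag n (s-1) X + Complex.I * adiag n s X)) := by ring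
      rw [this, Complex.re_ofReal_mul]

noncomputable def tauLin : Matrix (Fin n) (Fin n) ℂ →ₗ[ℝ] (Fin n → ℝ) :=
  LinearMap.pi (fun s : Fin n => tLin n μ (s : ℕ))

noncomputable def toepLin : (Fin n → ℝ) →ₗ[ℝ] Matrix (Fin n) (Fin n) ℂ where
  toFun g := toep n g
  map_add' g g' := by
    ext u j
    simp only [toep, Matrix.of_apply, Matrix.add_apply, Pi.add_apply]
    split
    · push_cast
      ring
    · rw [add_zero]
  map_smul' r g := by
    ext u j
    simp only [toep, Matrix.of_apply, Matrix.smul_apply, Pi.smul_apply, smul_eq_mul,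
      RingHom.id_apply]
    split
    · rw [Complex.real_smul]
      push_cast
      ring
    · rw [smul_zero]


lemma adiag_diag (d : Fin n → ℂ) (s : ℕ) :
    adiag n s (Matrix.of fun p q => if p = q then d p else 0)
      = ∑ p : Fin n, if 2 * (p : ℕ) = s then d p else 0 := by
  unfold adiag
  refine Finset.sum_congr rfl fun p _ => ?_
  have hsummand : ∀ q : Fin n,
      (if (p : ℕ) + (q : ℕ) = s then (Matrix.of fun p q => if p = q then d p else 0) p q else 0)
      = if ((q : ℕ) = (p : ℕ)) ∧ ((p : ℕ) + (q : ℕ) = s) then d p else 0 := by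
    intro q
    simp only [Matrix.of_apply]
    by_cases hA : (p : ℕ) + (q : ℕ) = s <;> by_cases hB : p = q
    · rw [if_pos hA, if_pos hB, if_pos ⟨(congrArg Fin.val hB).symm, hA⟩]
    · rw [if_pos hA, if_neg hB, if_neg (fun h => hB (Fin.ext h.1.symm))]
    · rw [if_neg hA, if_neg (fun h => hA h.2)]
    · rw [if_neg hA, if_neg (fun h => hA h.2)]
  simp only [hsummand]
  by_cases h2 : 2 * (p : ℕ) = s
  · rw [if_pos h2]
    refine sum_pick n (fun _ => d p) (fun a => a = (p : ℕ) ∧ (p : ℕ) + a = s) p ?_ ?_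
    · exact ⟨rfl, by omega⟩
    · intro b hb; exact Fin.ext hb.1
  · rw [if_neg h2]
    refine sum_pick_none n (fun _ => d p) (fun a => a = (p : ℕ) ∧ (p : ℕ) + a = s) ?_
    intro b hb
    exact h2 (by omega)

lemma adiag_diag_even (d : Fin n → ℂ) (t : ℕ) (ht : t < n) :
    adiag n (2 * t) (Matrix.of fun p q => if p = q then d p else 0) = d ⟨t, ht⟩ := by
  rw [adiag_diag]
  refine sum_pick n (fun p => d p) (fun a => 2 * a = 2 * t) ⟨t, ht⟩ ?_ ?_
  · simp only [Fin.val_mk]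
  · intro b hb; apply Fin.ext; simp only [Fin.val_mk]; omega

lemma adiag_diag_odd (d : Fin n → ℂ) (s : ℕ) (hodd : s % 2 = 1) :
    adiag n s (Matrix.of fun p q => if p = q then d p else 0) = 0 := by
  rw [adiag_diag]
  refine sum_pick_none n (fun p => d p) (fun a => 2 * a = s) ?_
  intro b hb
  omega

/-- the candidate diagonal entries hitting a prescribed value of `τ` -/
noncomputable def dvec (c : Fin n → ℝ) : Fin n → ℂ := fun p =>
  if h1 : 2 * (p : ℕ) + 1 < n then
    μ * ((c ⟨2 * (p : ℕ) + 1, h1⟩ : ℂ) - Complex.I * (c ⟨2 * (p : ℕ), by omega⟩ : ℂ))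
  else if h2 : 2 * (p : ℕ) + 1 = n then ((c ⟨2 * (p : ℕ), by omega⟩ / μ.im : ℝ) : ℂ)
  else 0

noncomputable def Dc (c : Fin n → ℝ) : Matrix (Fin n) (Fin n) ℂ :=
  Matrix.of fun p q => if p = q then dvec n μ c p else 0


lemma re_helper1 (hμ1 : (starRingEnd ℂ) μ * μ = 1) (x y : ℝ) :
    ((starRingEnd ℂ) μ * (0 + Complex.I * (μ * ((x : ℂ) - Complex.I * (y : ℂ))))).re = y := by
  have key : (starRingEnd ℂ) μ * (0 + Complex.I * (μ * ((x : ℂ) - Complex.I * (y : ℂ))))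
      = (y : ℂ) + (x : ℂ) * Complex.I := by
    linear_combination (Complex.I * ((x : ℂ) - Complex.I * (y : ℂ))) * hμ1 - (y : ℂ) * Complex.I_sq
  rw [key]
  simp

lemma re_helper2 (x : ℝ) :
    ((starRingEnd ℂ) μ * (0 + Complex.I * ((x : ℝ) : ℂ))).re = x * μ.im := by
  simp [Complex.mul_re, Complex.mul_im]
  ring

lemma re_helper3 (hμ1 : (starRingEnd ℂ) μ * μ = 1) (x y : ℝ) :
    ((starRingEnd ℂ) μ * ((μ * ((x : ℂ) - Complex.I * (y : ℂ))) + Complex.I * 0)).re = x := by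
  have key : (starRingEnd ℂ) μ * ((μ * ((x : ℂ) - Complex.I * (y : ℂ))) + Complex.I * 0)
      = (x : ℂ) - Complex.I * (y : ℂ) := by
    linear_combination ((x : ℂ) - Complex.I * (y : ℂ)) * hμ1
  rw [key]
  simp

lemma tf_Dc (hμ1 : (starRingEnd ℂ) μ * μ = 1) (hμim : μ.im ≠ 0) (c : Fin n → ℝ) (s : Fin n) :
    tf n μ (s : ℕ) (Dc n μ c) = c s := by
  unfold tf Dc
  have hsn := s.isLt
  by_cases hpar : (s : ℕ) % 2 = 0
  · have ht : (s : ℕ) / 2 < n := by omega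
    have hzero : (if (s : ℕ) = 0 then (0 : ℂ)
        else adiag n ((s : ℕ) - 1) (Matrix.of fun p q => if p = q then dvec n μ c p else 0)) = 0 := by
      by_cases h0 : (s : ℕ) = 0
      · rw [if_pos h0]
      · rw [if_neg h0, adiag_diag_odd]
        omega
    rw [hzero]
    have hs2 : 2 * ((s : ℕ) / 2) = (s : ℕ) := by omega
    have heven := adiag_diag_even n (dvec n μ c) ((s : ℕ) / 2) ht
    rw [hs2] at heven
    rw [heven]
    simp only [dvec, Fin.val_mk]
    by_cases h1 : 2 * ((s : ℕ) / 2) + 1 < n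
    · rw [dif_pos h1, re_helper1 μ hμ1]
      congr 1
      apply Fin.ext
      simp only [Fin.val_mk]
      omega
    · by_cases h2 : 2 * ((s : ℕ) / 2) + 1 = n
      · rw [dif_neg h1, dif_pos h2, re_helper2 μ]
        rw [div_mul_cancel₀ _ hμim]
        congr 1
        apply Fin.ext
        simp only [Fin.val_mk]
        omega
      · omega
  · -- s odd
    have h0 : (s : ℕ) ≠ 0 := by omega
    rw [if_neg h0]
    rw [adiag_diag_odd n _ (s : ℕ) (by omega)]
    have ht : (s : ℕ) / 2 < n := by omega
    have hs2 : 2 * ((s : ℕ) / 2) = (s : ℕ) - 1 := by omega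
    have hodd2 := adiag_diag_even n (dvec n μ c) ((s : ℕ) / 2) ht
    rw [hs2] at hodd2
    rw [hodd2]
    simp only [dvec, Fin.val_mk]
    have h1 : 2 * ((s : ℕ) / 2) + 1 < n := by omega
    rw [dif_pos h1, re_helper3 μ hμ1]
    congr 1
    apply Fin.ext
    simp only [Fin.val_mk]
    omega


lemma Dc_offdiag (c : Fin n → ℝ) : ∀ p q : Fin n, p ≠ q → Dc n μ c p q = 0 := by
  intro p q hpq
  simp only [Dc, Matrix.of_apply, if_neg hpq]

lemma Dc_gt (c : Fin n → ℝ) : ∀ p : Fin n, n / 2 < (p : ℕ) → Dc n μ c p p = 0 := by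
  intro p hp
  simp only [Dc, Matrix.of_apply, if_pos rfl, dvec]
  rw [dif_neg (by omega), dif_neg (by omega)]
  simp

lemma Dc_mid (c : Fin n → ℝ) : ∀ p : Fin n, (p : ℕ) = n / 2 →
    (n % 2 = 1 → (Dc n μ c p p).im = 0) ∧ (n % 2 = 0 → Dc n μ c p p = 0) := by
  intro p hp
  constructor
  · intro hodd
    simp only [Dc, Matrix.of_apply, if_pos rfl, dvec]
    rw [dif_neg (by omega), dif_pos (by omega)]
    exact Complex.ofReal_im _
  · intro heven
    simp only [Dc, Matrix.of_apply, if_pos rfl, dvec]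
    rw [dif_neg (by omega), dif_neg (by omega)]
    simp

lemma diag_inj (hμ0 : μ ≠ 0) (hμim : μ.im ≠ 0) (D : Matrix (Fin n) (Fin n) ℂ)
    (hoff : ∀ p q : Fin n, p ≠ q → D p q = 0)
    (hgt : ∀ p : Fin n, n / 2 < (p : ℕ) → D p p = 0)
    (hmid : ∀ p : Fin n, (p : ℕ) = n / 2 →
      (n % 2 = 1 → (D p p).im = 0) ∧ (n % 2 = 0 → D p p = 0))
    (h0 : ∀ s : Fin n, tf n μ (s : ℕ) D = 0) :
    D = 0 := by
  have hDof : D = Matrix.of fun p q => if p = q then D p p else 0 := by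
    ext p q
    by_cases h : p = q
    · subst h; simp
    · simp only [Matrix.of_apply, if_neg h]
      exact hoff p q h
  have h0' : ∀ s : Fin n, tf n μ (s : ℕ) (Matrix.of fun p q => if p = q then D p p else 0) = 0 := by
    intro s
    rw [← hDof]
    exact h0 s
  have hcj : (starRingEnd ℂ) μ ≠ 0 := by simpa using hμ0
  have hdiagzero : ∀ p : Fin n, D p p = 0 := by
    intro p
    have hpn := p.isLt
    by_cases h1 : 2 * (p : ℕ) + 1 < n
    · -- both functionals available
      have ho := h0' ⟨2 * (p : ℕ) + 1, h1⟩
      have he := h0' ⟨2 * (p : ℕ), by omega⟩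
      unfold tf at ho he
      simp only [Fin.val_mk] at ho he
      rw [if_neg (by omega), Nat.add_sub_cancel] at ho
      have heva := adiag_diag_even n (fun q => D q q) (p : ℕ) hpn
      simp only [Fin.eta] at heva
      rw [heva, adiag_diag_odd n _ _ (by omega)] at ho
      have hzero2 : (if 2 * (p : ℕ) = 0 then (0 : ℂ)
          else adiag n (2 * (p : ℕ) - 1) (Matrix.of fun p q => if p = q then D p p else 0)) = 0 := by
        by_cases hz : 2 * (p : ℕ) = 0
        · rw [if_pos hz]
        · rw [if_neg hz, adiag_diag_odd n _ _ (by omega)]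
      rw [hzero2, heva] at he
      -- ho : re(conj μ * (D p p + I * 0)) = 0 ; he : re(conj μ * (0 + I * D p p)) = 0
      set w := (starRingEnd ℂ) μ * D p p with hw
      have hre : w.re = 0 := by
        have : (starRingEnd ℂ) μ * (D p p + Complex.I * 0) = w := by rw [hw]; ring
        rwa [this] at ho
      have him : w.im = 0 := by
        have : (starRingEnd ℂ) μ * (0 + Complex.I * D p p) = Complex.I * w := by rw [hw]; ring
        rw [this] at he
        simpa using he
      have hw0 : w = 0 := Complex.ext hre him
      rcases mul_eq_zero.mp (hw.symm.trans hw0 : (starRingEnd ℂ) μ * D p p = 0) with h | h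
      · exact absurd h hcj
      · exact h
    · by_cases h2 : 2 * (p : ℕ) + 1 = n
      · -- middle entry, real
        have himz : (D p p).im = 0 := (hmid p (by omega)).1 (by omega)
        have he := h0' ⟨2 * (p : ℕ), by omega⟩
        unfold tf at he
        simp only [Fin.val_mk] at he
        have hzero2 : (if 2 * (p : ℕ) = 0 then (0 : ℂ)
            else adiag n (2 * (p : ℕ) - 1) (Matrix.of fun p q => if p = q then D p p else 0)) = 0 := by
          by_cases hz : 2 * (p : ℕ) = 0
          · rw [if_pos hz]
          · rw [if_neg hz, adiag_diag_odd n _ _ (by omega)]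
        have heva := adiag_diag_even n (fun q => D q q) (p : ℕ) hpn
        simp only [Fin.eta] at heva
        rw [hzero2, heva] at he
        have hDre : D p p = ((D p p).re : ℂ) := by
          apply Complex.ext
          · simp
          · simp [himz]
        rw [hDre, re_helper2 μ] at he
        have : (D p p).re = 0 := by
          rcases mul_eq_zero.mp he with h | h
          · exact h
          · exact absurd h hμim
        rw [hDre, this, Complex.ofReal_zero]
      · -- zero by the V conditions
        by_cases hp2 : (p : ℕ) = n / 2
        · exact (hmid p hp2).2 (by omega)
        · exact hgt p (by omega)
  ext p q
  by_cases h : p = q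
  · subst h
    rw [hdiagzero p]
    rfl
  · rw [hoff p q h]
    rfl

end S8


open S8 in
theorem stmt8 (n : ℕ) (μ : ℂ) (h1 : ‖μ‖ = 1) (h2 : μ.im ≠ 0)
    (A : Matrix (Fin n) (Fin n) ℂ) :
    ∃! D : Matrix (Fin n) (Fin n) ℂ,
      ((∀ p q : Fin n, p ≠ q → D p q = 0) ∧
       (∀ p : Fin n, n / 2 < (p : ℕ) → D p p = 0) ∧
       (∀ p : Fin n, (p : ℕ) = n / 2 →
          (n % 2 = 1 → (D p p).im = 0) ∧ (n % 2 = 0 → D p p = 0))) ∧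
      A - D ∈ Tset (μ • Dmat n) := by
  classical
  have hμ0 : μ ≠ 0 := by
    intro h
    rw [h] at h1
    simp at h1
  have hμ1 : (starRingEnd ℂ) μ * μ = 1 := by
    have hns : Complex.normSq μ = 1 := by
      rw [Complex.normSq_eq_norm_sq, h1, one_pow]
    calc (starRingEnd ℂ) μ * μ = μ * (starRingEnd ℂ) μ := mul_comm _ _
      _ = (Complex.normSq μ : ℂ) := Complex.mul_conj μ
      _ = 1 := by rw [hns]; norm_num
  -- the tangent space is the common kernel of the functionals
  have hle : LinearMap.range (psiLin n μ) ≤ LinearMap.ker (tauLin n μ) := by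
    rintro X ⟨C, rfl⟩
    rw [LinearMap.mem_ker]
    funext s
    exact tf_psi_zero n μ (s : ℕ) s.isLt C
  have hrk1 := LinearMap.finrank_range_add_finrank_ker (psiLin n μ)
  have hker_le : Module.finrank ℝ (LinearMap.ker (psiLin n μ)) ≤ n := by
    have hsub : LinearMap.ker (psiLin n μ) ≤ LinearMap.range (toepLin n) := by
      intro C hC
      rw [LinearMap.mem_ker] at hC
      obtain ⟨g, hg⟩ := ker_structure n μ hμ0 C hC
      exact ⟨g, hg.symm⟩
    refine le_trans (Submodule.finrank_mono hsub) (le_trans (LinearMap.finrank_range_le _) ?_)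
    simp
  have hsurj : Function.Surjective (tauLin n μ) := by
    intro c
    refine ⟨Dc n μ c, ?_⟩
    funext s
    exact tf_Dc n μ hμ1 h2 c s
  have hrk2 : Module.finrank ℝ (LinearMap.ker (tauLin n μ))
      = Module.finrank ℝ (Matrix (Fin n) (Fin n) ℂ) - n := by
    have h3 := LinearMap.finrank_range_add_finrank_ker (tauLin n μ)
    rw [LinearMap.range_eq_top.mpr hsurj, finrank_top] at h3
    have h4 : Module.finrank ℝ (Fin n → ℝ) = n := by simp
    omega
  have hEn : n ≤ Module.finrank ℝ (Matrix (Fin n) (Fin n) ℂ) := by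
    have hE : Module.finrank ℝ (Matrix (Fin n) (Fin n) ℂ) = 2 * n ^ 2 := by
      rw [Module.finrank_matrix]
      simp [Complex.finrank_real_complex]
      ring
    rw [hE]
    nlinarith
  have heq : LinearMap.range (psiLin n μ) = LinearMap.ker (tauLin n μ) :=
    Submodule.eq_of_le_of_finrank_le hle (by omega)
  set c : Fin n → ℝ := fun s => tf n μ (s : ℕ) A with hc
  have htauA : tauLin n μ A = c := rfl
  have htauD : tauLin n μ (Dc n μ c) = c := by
    funext s
    exact tf_Dc n μ hμ1 h2 c s
  refine ⟨Dc n μ c, ⟨⟨Dc_offdiag n μ c, Dc_gt n μ c, Dc_mid n μ c⟩, ?_⟩, ?_⟩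
  · have hmem : A - Dc n μ c ∈ LinearMap.ker (tauLin n μ) := by
      rw [LinearMap.mem_ker, map_sub, htauA, htauD, sub_self]
    rw [← heq] at hmem
    obtain ⟨C, hC⟩ := hmem
    exact ⟨C, hC.symm⟩
  · rintro D' ⟨⟨hoff', hgt', hmid'⟩, hT'⟩
    obtain ⟨C', hC'⟩ := hT'
    have hmem' : A - D' ∈ LinearMap.ker (tauLin n μ) := by
      rw [← heq]
      exact ⟨C', hC'.symm⟩
    rw [LinearMap.mem_ker, map_sub, htauA] at hmem'
    have htauD' : tauLin n μ D' = c := by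
      have := sub_eq_zero.mp hmem'
      exact this.symm ▸ rfl
    have hzero : ∀ s : Fin n, tf n μ (s : ℕ) (D' - Dc n μ c) = 0 := by
      intro s
      have : tauLin n μ (D' - Dc n μ c) = 0 := by
        rw [map_sub, htauD', htauD, sub_self]
      exact congrFun this s
    have hD0 : D' - Dc n μ c = 0 := by
      refine diag_inj n μ hμ0 h2 _ ?_ ?_ ?_ hzero
      · intro p q hpq
        rw [Matrix.sub_apply, hoff' p q hpq, Dc_offdiag n μ c p q hpq, sub_self]
      · intro p hp
        rw [Matrix.sub_apply, hgt' p hp, Dc_gt n μ c p hp, sub_self]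
      · intro p hp
        constructor
        · intro hodd
          rw [Matrix.sub_apply, Complex.sub_im, (hmid' p hp).1 hodd,
            (Dc_mid n μ c p hp).1 hodd, sub_self]
        · intro heven
          rw [Matrix.sub_apply, (hmid' p hp).2 heven, (Dc_mid n μ c p hp).2 heven, sub_self]
    exact sub_eq_zero.mp hD0
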